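/- arXiv:1401.1874 — 13 statements merged into one kernel-verified Lean document; each statement's English description precedes it below -/
import Mathlib

section
/- Let n ≥ 1, let Z₀ be the n×n lower shift matrix over ℂ, and let t_{-(n-1)}, …, t_{n-1} ∈ ℂ. Let T be the n×n Toeplitz matrix with entries T_{ij} = t_{i-j}. Then T − Z₀·T·Z₀ᵀ = G·B, where G is the n×2 matrix whose first column is (t₀/2, t₁, t₂, …, t_{n-1})ᵀ and whose second column is (1, 0, …, 0)ᵀ, and B is the 2×n matrix whose first row is (1, 0, …, 0) and whose second row is (t₀/2, t_{-1}, t_{-2}, …, t_{-n+1}). In particular, the displacement T − Z₀·T·Z₀ᵀ has rank at most 2. -/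
open Matrix

private lemma sum_shift {m : ℕ} (f : Fin (m+1) → ℂ) (i' : Fin m) :
    (∑ k : Fin (m+1), if ((i'.succ : Fin (m+1)) : ℕ) = (k : ℕ) + 1 then f k else 0)
      = f i'.castSucc := by
  have h : ∀ k : Fin (m+1),
      (((i'.succ : Fin (m+1)) : ℕ) = (k : ℕ) + 1) ↔ k = i'.castSucc := by
    intro k
    rw [Fin.ext_iff]
    simp only [Fin.val_succ, Fin.coe_castSucc]
    omega
  simp_rw [h]
  simp [Finset.sum_ite_eq']

private lemma sum_zero {m : ℕ} (f : Fin (m+1) → ℂ) :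
    (∑ k : Fin (m+1), if ((0 : Fin (m+1)) : ℕ) = (k : ℕ) + 1 then f k else 0) = 0 := by
  apply Finset.sum_eq_zero
  intro k _
  simp

/-- displacement structure of a Toeplitz matrix.
`Z` is the `n × n` lower shift matrix, `T` the Toeplitz matrix with entries
`T i j = t (i - j)`.  Then `T - Z * T * Zᵀ = G * B` with the explicit rank-two
generators `G`, `B`, and in particular the displacement has rank at most `2`. -/
theorem toeplitz_displacement (n : ℕ) (hn : 1 ≤ n) (t : ℤ → ℂ)
    (Z : Matrix (Fin n) (Fin n) ℂ)
    (hZ : ∀ i j : Fin n, Z i j = if (i : ℕ) = (j : ℕ) + 1 then 1 else 0)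
    (T : Matrix (Fin n) (Fin n) ℂ)
    (hT : ∀ i j : Fin n, T i j = t ((i : ℤ) - (j : ℤ)))
    (G : Matrix (Fin n) (Fin 2) ℂ)
    (hG0 : ∀ i : Fin n, G i 0 = if (i : ℕ) = 0 then t 0 / 2 else t (i : ℕ))
    (hG1 : ∀ i : Fin n, G i 1 = if (i : ℕ) = 0 then 1 else 0)
    (B : Matrix (Fin 2) (Fin n) ℂ)
    (hB0 : ∀ j : Fin n, B 0 j = if (j : ℕ) = 0 then 1 else 0)
    (hB1 : ∀ j : Fin n, B 1 j = if (j : ℕ) = 0 then t 0 / 2 else t (-((j : ℕ) : ℤ))) :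
    T - Z * T * Zᵀ = G * B ∧ (T - Z * T * Zᵀ).rank ≤ 2 := by
  have key : T - Z * T * Zᵀ = G * B := by
    obtain ⟨m, rfl⟩ : ∃ m, n = m + 1 := ⟨n - 1, (Nat.succ_pred_eq_of_pos hn).symm⟩
    ext i j
    have hGB : (G * B) i j = G i 0 * B 0 j + G i 1 * B 1 j := by
      simp [mul_apply, Fin.sum_univ_two]
    have hmul : (Z * T * Zᵀ) i j
        = ∑ l : Fin (m+1), (if (j : ℕ) = (l : ℕ) + 1 then
            (∑ k : Fin (m+1), if (i : ℕ) = (k : ℕ) + 1 then T k l else 0) else 0) := by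
      simp only [mul_apply, hZ, transpose_apply, ite_mul, mul_ite, mul_zero,
        mul_one, zero_mul, one_mul]
    rw [Matrix.sub_apply, hGB, hmul]
    induction j using Fin.cases with
    | zero =>
      rw [sum_zero, sub_zero, hT, hG0, hG1, hB0, hB1]
      rcases Nat.eq_zero_or_pos (i : ℕ) with hi | hi
      · simp only [hi, if_true, Fin.val_zero, if_pos rfl]
        simp
      · simp [hi.ne', Fin.val_zero]
    | succ j' =>
      rw [sum_shift (fun l => ∑ k : Fin (m+1), if (i : ℕ) = (k : ℕ) + 1 then T k l else 0) j']
      induction i using Fin.cases with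
      | zero =>
        rw [sum_zero, sub_zero, hT, hG0, hG1, hB0, hB1]
        simp only [Fin.val_zero, Fin.val_succ, Nat.succ_ne_zero, if_false, if_true]
        rw [one_mul, mul_zero, zero_add]
        congr 1
      | succ i' =>
        rw [sum_shift (fun k => T k j'.castSucc) i', hT, hT, hG0, hG1, hB0, hB1]
        have e : (((i'.succ : Fin (m+1)) : ℕ) : ℤ) - (((j'.succ : Fin (m+1)) : ℕ) : ℤ)
            = (((i'.castSucc : Fin (m+1)) : ℕ) : ℤ) - (((j'.castSucc : Fin (m+1)) : ℕ) : ℤ) := by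
          simp only [Fin.val_succ, Fin.coe_castSucc]
          push_cast
          ring
        rw [e]
        simp [Fin.val_succ]
  refine ⟨key, ?_⟩
  rw [key]
  calc (G * B).rank ≤ G.rank := rank_mul_le_left G B
    _ ≤ Fintype.card (Fin 2) := rank_le_card_width G
    _ = 2 := by simp
end

section
/- Let Q = {Q₀, …, Q_{n-1}} be a system of polynomials over ℂ satisfying general recurrence relations with coefficients τ_k and a_{j,k}, let M_Q and N_Q be the associated recurrence-relation matrices, let x₁, …, xₙ ∈ ℂ, let V_Q(x) be the polynomial Vandermonde matrix, and let D_x = diag(x₁, …, xₙ). Then V_Q(x)·M_Q − D_x·V_Q(x)·N_Q = 𝟙·e₁ᵀ·τ₀, i.e., it equals the rank-one n×n matrix whose first column has every entry equal to τ₀ and all other columns are zero. -/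
open Matrix Polynomial Finset

/-- displacement equation for a polynomial Vandermonde matrix.
The polynomial system `Q` satisfies the general recurrence relations with
coefficients `τ`, `a`; `M` and `N` are the recurrence-relation matrices
(0-indexed: `M i j = a i j` for `i < j`, `1` on the diagonal, and
`N i (i+1) = τ (i+1)`), `V` is the polynomial Vandermonde matrix, and
`D_x = diagonal x`.  Then `V * M - D_x * V * N` is the rank-one matrix
whose first column has each entry equal to `τ 0` and whose other columns
vanish. -/
theorem polyVandermonde_displacement (n : ℕ) (τ : ℕ → ℂ) (a : ℕ → ℕ → ℂ)
    (Q : ℕ → Polynomial ℂ)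
    (hQ0 : Q 0 = C (τ 0))
    (hQrec : ∀ k, 1 ≤ k → k ≤ n - 1 →
      Q k = C (τ k) * X * Q (k - 1) - ∑ j ∈ Finset.range k, C (a j k) * Q j)
    (x : Fin n → ℂ)
    (M N V : Matrix (Fin n) (Fin n) ℂ)
    (hM : ∀ i j : Fin n,
      M i j = if (i : ℕ) = (j : ℕ) then 1
              else if (i : ℕ) < (j : ℕ) then a (i : ℕ) (j : ℕ) else 0)
    (hN : ∀ i j : Fin n,
      N i j = if (j : ℕ) = (i : ℕ) + 1 then τ ((i : ℕ) + 1) else 0)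
    (hV : ∀ i j : Fin n, V i j = (Q (j : ℕ)).eval (x i)) :
    V * M - Matrix.diagonal x * V * N =
      Matrix.of (fun _ j : Fin n => if (j : ℕ) = 0 then τ 0 else 0) := by
  ext i j
  set g : ℕ → ℂ := fun k => (Q k).eval (x i) with hg
  have hjn : (j : ℕ) < n := j.isLt
  have h1 : (V * M) i j
      = g (j : ℕ) + ∑ k ∈ Finset.range (j : ℕ), a k (j : ℕ) * g k := by
    rw [Matrix.mul_apply]
    have : ∀ k : Fin n, V i k * M k j
        = g (k : ℕ) * (if (k : ℕ) = (j : ℕ) then 1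
            else if (k : ℕ) < (j : ℕ) then a (k : ℕ) (j : ℕ) else 0) := by
      intro k; rw [hV, hM]
    rw [Finset.sum_congr rfl (fun k _ => this k)]
    rw [Fin.sum_univ_eq_sum_range (fun k => g k *
      (if k = (j : ℕ) then 1 else if k < (j : ℕ) then a k (j : ℕ) else 0)) n]
    rw [← Finset.sum_subset (Finset.range_subset_range.2 hjn)
      (by intro k _ hk; simp only [Finset.mem_range, not_lt] at hk
          have h1 : k ≠ (j : ℕ) := by omega
          have h2 : ¬ k < (j : ℕ) := by omega
          simp [h1, h2])]
    rw [Finset.sum_range_succ]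
    simp only [lt_irrefl, if_false, if_true, mul_one]
    rw [add_comm]
    congr 1
    refine Finset.sum_congr rfl fun k hk => ?_
    simp only [Finset.mem_range] at hk
    rw [if_neg (by omega), if_pos hk, mul_comm]
  have h2 : (Matrix.diagonal x * V * N) i j
      = if (j : ℕ) = 0 then 0 else x i * g ((j : ℕ) - 1) * τ (j : ℕ) := by
    rw [Matrix.mul_apply]
    have : ∀ k : Fin n, (Matrix.diagonal x * V) i k * N k j
        = (if (j : ℕ) = (k : ℕ) + 1 then x i * g (k : ℕ) * τ ((k : ℕ) + 1) else 0) := by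
      intro k
      rw [Matrix.diagonal_mul, hV, hN]
      split <;> simp [hg]
    rw [Finset.sum_congr rfl (fun k _ => this k)]
    rw [Fin.sum_univ_eq_sum_range (fun k =>
      if (j : ℕ) = k + 1 then x i * g k * τ (k + 1) else 0) n]
    rcases Nat.eq_zero_or_pos (j : ℕ) with h0 | h0
    · rw [if_pos h0]
      refine Finset.sum_eq_zero fun k _ => if_neg (by omega)
    · rw [if_neg (by omega)]
      obtain ⟨m, hm⟩ : ∃ m, (j : ℕ) = m + 1 := ⟨(j : ℕ) - 1, by omega⟩
      rw [Finset.sum_eq_single m]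
      · rw [if_pos hm]; simp [hm]
      · intro k _ hk; exact if_neg (by omega)
      · intro h; exact absurd (Finset.mem_range.2 (by omega)) h
  rw [Matrix.sub_apply, h1, h2, Matrix.of_apply]
  rcases Nat.eq_zero_or_pos (j : ℕ) with h0 | h0
  · simp [h0, hg, hQ0]
  · rw [if_neg (by omega), if_neg (by omega)]
    have hrec := hQrec (j : ℕ) h0 (by omega)
    have : g (j : ℕ) = τ (j : ℕ) * x i * g ((j : ℕ) - 1)
        - ∑ k ∈ Finset.range (j : ℕ), a k (j : ℕ) * g k := by
      rw [hg]; simp only [hrec, eval_sub, eval_mul, eval_C, eval_X, eval_finset_sum]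
    rw [this]; ring
end

section
/- Let R be an n×n complex matrix with block partition R = [[d, u], [l, R₂₂]], where d ∈ ℂ is nonzero, u is 1×(n−1), l is (n−1)×1, and R₂₂ is (n−1)×(n−1). Suppose Ω·R − R·A = G·B, where Ω ∈ ℂ^{n×n} is lower triangular, A ∈ ℂ^{n×n} is upper triangular, G ∈ ℂ^{n×α}, B ∈ ℂ^{α×n}. Let g₁ be the first row of G and b₁ the first column of B, and define G' ∈ ℂ^{(n-1)×α} and B' ∈ ℂ^{α×(n-1)} by [0; G'] = G − [1; l/d]·g₁ and [0, B'] = B − b₁·[1, u/d]. Then the Schur complement R' = R₂₂ − (1/d)·l·u satisfies Ω'·R' − R'·A' = G'·B', where Ω' and A' are obtained from Ω and A by deleting the first row and first column. -/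
open Matrix

/-- displacement structure of the Schur complement.
`R` is an `(n+1) × (n+1)` matrix with `d = R 0 0 ≠ 0`, `Ω` lower triangular,
`A` upper triangular, satisfying `Ω * R - R * A = G * B`.  With `R'` the Schur
complement of `d` in `R`, `Ω'`, `A'` obtained by deleting the first row and
column of `Ω`, `A`, and the updated generators `G'`, `B'`, we have
`Ω' * R' - R' * A' = G' * B'`. -/
theorem schur_complement_displacement (n α : ℕ)
    (R Ω A : Matrix (Fin (n + 1)) (Fin (n + 1)) ℂ)
    (G : Matrix (Fin (n + 1)) (Fin α) ℂ) (B : Matrix (Fin α) (Fin (n + 1)) ℂ)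
    (hd : R 0 0 ≠ 0)
    (hΩ : ∀ i j : Fin (n + 1), i < j → Ω i j = 0)
    (hA : ∀ i j : Fin (n + 1), j < i → A i j = 0)
    (hdisp : Ω * R - R * A = G * B)
    (R' Ω' A' : Matrix (Fin n) (Fin n) ℂ)
    (hR' : ∀ i j : Fin n,
      R' i j = R i.succ j.succ - R i.succ 0 * R 0 j.succ / R 0 0)
    (hΩ' : ∀ i j : Fin n, Ω' i j = Ω i.succ j.succ)
    (hA' : ∀ i j : Fin n, A' i j = A i.succ j.succ)
    (G' : Matrix (Fin n) (Fin α) ℂ) (B' : Matrix (Fin α) (Fin n) ℂ)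
    (hG' : ∀ (i : Fin n) (p : Fin α),
      G' i p = G i.succ p - (R i.succ 0 / R 0 0) * G 0 p)
    (hB' : ∀ (p : Fin α) (j : Fin n),
      B' p j = B p j.succ - B p 0 * (R 0 j.succ / R 0 0)) :
    Ω' * R' - R' * A' = G' * B' := by
  have hGB : ∀ a b : Fin (n + 1),
      ∑ p, G a p * B p b = (∑ k, Ω a k * R k b) - ∑ k, R a k * A k b := by
    intro a b
    have := congrFun (congrFun hdisp a) b
    simpa [mul_apply, Matrix.sub_apply] using this.symm
  ext i j
  simp only [Matrix.sub_apply, mul_apply, hR', hΩ', hA', hG', hB']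
  -- Expand the left sums over Fin n into full sums over Fin (n+1)
  have L1 : ∑ k : Fin n, Ω i.succ k.succ *
        (R k.succ j.succ - R k.succ 0 * R 0 j.succ / R 0 0)
      = ((∑ k : Fin (n+1), Ω i.succ k * R k j.succ) - Ω i.succ 0 * R 0 j.succ)
        - ((∑ k : Fin (n+1), Ω i.succ k * R k 0) - Ω i.succ 0 * R 0 0)
          * (R 0 j.succ / R 0 0) := by
    rw [Fin.sum_univ_succ (fun k => Ω i.succ k * R k j.succ),
        Fin.sum_univ_succ (fun k => Ω i.succ k * R k 0),
        Finset.sum_congr rfl (fun k _ =>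
          (by ring : Ω i.succ k.succ *
            (R k.succ j.succ - R k.succ 0 * R 0 j.succ / R 0 0)
            = Ω i.succ k.succ * R k.succ j.succ -
              (Ω i.succ k.succ * R k.succ 0) * (R 0 j.succ / R 0 0))),
        Finset.sum_sub_distrib, ← Finset.sum_mul]
    ring
  have L2 : ∑ k : Fin n,
        (R i.succ k.succ - R i.succ 0 * R 0 k.succ / R 0 0) * A k.succ j.succ
      = ((∑ k : Fin (n+1), R i.succ k * A k j.succ) - R i.succ 0 * A 0 j.succ)
        - (R i.succ 0 / R 0 0) *
          ((∑ k : Fin (n+1), R 0 k * A k j.succ) - R 0 0 * A 0 j.succ) := by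
    rw [Fin.sum_univ_succ (fun k => R i.succ k * A k j.succ),
        Fin.sum_univ_succ (fun k => R 0 k * A k j.succ),
        Finset.sum_congr rfl (fun k _ =>
          (by field_simp :
            (R i.succ k.succ - R i.succ 0 * R 0 k.succ / R 0 0) * A k.succ j.succ
            = R i.succ k.succ * A k.succ j.succ -
              (R i.succ 0 / R 0 0) * (R 0 k.succ * A k.succ j.succ))),
        Finset.sum_sub_distrib, ← Finset.mul_sum]
    ring
  have L3 : ∑ p : Fin α,
        (G i.succ p - R i.succ 0 / R 0 0 * G 0 p) *
          (B p j.succ - B p 0 * (R 0 j.succ / R 0 0))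
      = (∑ p, G i.succ p * B p j.succ)
        - (R i.succ 0 / R 0 0) * (∑ p, G 0 p * B p j.succ)
        - (R 0 j.succ / R 0 0) * (∑ p, G i.succ p * B p 0)
        + (R i.succ 0 / R 0 0 * (R 0 j.succ / R 0 0)) * (∑ p, G 0 p * B p 0) := by
    rw [Finset.sum_congr rfl (fun p _ =>
        (by ring : (G i.succ p - R i.succ 0 / R 0 0 * G 0 p) *
            (B p j.succ - B p 0 * (R 0 j.succ / R 0 0))
          = (G i.succ p * B p j.succ
            - (R i.succ 0 / R 0 0) * (G 0 p * B p j.succ)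
            - (R 0 j.succ / R 0 0) * (G i.succ p * B p 0))
            + (R i.succ 0 / R 0 0 * (R 0 j.succ / R 0 0)) * (G 0 p * B p 0))),
        Finset.sum_add_distrib, Finset.sum_sub_distrib, Finset.sum_sub_distrib,
        ← Finset.mul_sum, ← Finset.mul_sum, ← Finset.mul_sum]
  rw [L1, L2, L3, hGB, hGB, hGB, hGB]
  -- special sums from triangularity
  have s1 : ∑ k : Fin (n+1), Ω 0 k * R k j.succ = Ω 0 0 * R 0 j.succ := by
    rw [Fin.sum_univ_succ]
    simp [fun k : Fin n => hΩ 0 k.succ (Fin.succ_pos k)]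
  have s2 : ∑ k : Fin (n+1), Ω 0 k * R k 0 = Ω 0 0 * R 0 0 := by
    rw [Fin.sum_univ_succ]
    simp [fun k : Fin n => hΩ 0 k.succ (Fin.succ_pos k)]
  have s3 : ∑ k : Fin (n+1), R i.succ k * A k 0 = R i.succ 0 * A 0 0 := by
    rw [Fin.sum_univ_succ]
    simp [fun k : Fin n => hA k.succ 0 (Fin.succ_pos k)]
  have s4 : ∑ k : Fin (n+1), R 0 k * A k 0 = R 0 0 * A 0 0 := by
    rw [Fin.sum_univ_succ]
    simp [fun k : Fin n => hA k.succ 0 (Fin.succ_pos k)]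
  simp only [s1, s2, s3, s4]
  field_simp
  ring
end

section
/- Let the polynomials {Q_k}_{k=0}^{n-1} and auxiliary polynomials {G_k}_{k=0}^{n-1} over ℂ satisfy EGO-type two-term recurrence relations with coefficients α_k, β_k, γ_k, δ_k, θ_k, and assume G₀ = 0. Then for every k = 1, …, n−1: Q_k(x) = (δ_k·x + θ_k)·Q_{k-1}(x) + Σ_{j=0}^{k-2} γ_k·(∏_{i=j+2}^{k-1} α_i)·β_{j+1}·Q_j(x). Equivalently, Q satisfies general recurrence relations with τ_k = δ_k, a_{k-1,k} = −θ_k, and a_{j,k} = −β_{j+1}·(∏_{i=j+2}^{k-1} α_i)·γ_k for j < k−1. -/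
open Polynomial Finset

/-- quasiseparable polynomials satisfying EGO-type two-term
recurrence relations (with auxiliary polynomials `G`, `G 0 = 0`) satisfy the
general recurrence relations
`Q k = (δ k • x + θ k) * Q (k-1) + ∑_{j=0}^{k-2} γ k (∏_{i=j+2}^{k-1} α i) β (j+1) * Q j`,
i.e. with `τ k = δ k`, `a (k-1) k = -θ k`, and
`a j k = -β (j+1) (∏_{i=j+2}^{k-1} α i) γ k` for `j < k - 1`. -/
theorem ego_to_general_recurrence (n : ℕ) (α β γ δ θ : ℕ → ℂ)
    (Q G : ℕ → Polynomial ℂ)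
    (hG0 : G 0 = 0)
    (hrec : ∀ k, 1 ≤ k → k ≤ n - 1 →
      G k = C (α k) * G (k - 1) + C (β k) * Q (k - 1) ∧
      Q k = C (γ k) * G (k - 1) + (C (δ k) * X + C (θ k)) * Q (k - 1)) :
    ∀ k, 1 ≤ k → k ≤ n - 1 →
      Q k = (C (δ k) * X + C (θ k)) * Q (k - 1)
        + ∑ j ∈ Finset.range (k - 1),
            C (γ k * (∏ i ∈ Finset.Ico (j + 2) k, α i) * β (j + 1)) * Q j := by
  have hGm : ∀ m, m ≤ n - 1 →
      G m = ∑ j ∈ Finset.range m,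
        C ((∏ i ∈ Finset.Ico (j + 2) (m + 1), α i) * β (j + 1)) * Q j := by
    intro m
    induction m with
    | zero => intro _; simp [hG0]
    | succ m ih =>
      intro hm
      have h := (hrec (m + 1) (Nat.le_add_left 1 m) hm).1
      simp only [Nat.add_sub_cancel] at h
      rw [h, ih (le_trans (Nat.le_succ m) hm)]
      rw [Finset.sum_range_succ, Finset.mul_sum]
      congr 1
      · apply Finset.sum_congr rfl
        intro j hj
        have hj' : j + 2 ≤ m + 1 := by
          have := Finset.mem_range.mp hj; omega
        rw [← mul_assoc, ← C_mul]
        congr 2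
        rw [show m + 1 + 1 = (m + 1) + 1 from rfl,
          Finset.prod_Ico_succ_top hj']
        ring
      · rw [show Finset.Ico (m + 2) (m + 2) = ∅ from Finset.Ico_self _]
        simp
  intro k hk hkn
  have h := (hrec k hk hkn).2
  rw [h, hGm (k - 1) (le_trans (Nat.sub_le k 1) hkn)]
  rw [Nat.sub_add_cancel hk, Finset.mul_sum, add_comm]
  congr 1
  apply Finset.sum_congr rfl
  intro j _
  rw [← mul_assoc, ← C_mul, mul_assoc]
end

section
/- Let n ≥ 1 and t_j, α_i, β_j, γ_i ∈ ℂ. Define the row vectors g_j = (t_j, −β_j) ∈ ℂ^{1×2} for j = 1, …, n−1, the 2×2 matrices b_i = [[0, 0], [γ_i, α_i]] for i = 2, …, n−1, and the column vector h = (1, 0)ᵀ. Then for all indices with 1 ≤ j and j+1 < k ≤ n: g_j·b_{j+1}·b_{j+2}⋯b_{k-1}·h = −β_j·(∏_{i=j+1}^{k-2} α_i)·γ_{k-1}. Consequently, the unit upper triangular n×n matrix M̃ with diagonal entries 1, superdiagonal entries (M̃)_{j,j+1} = t_j, and entries (M̃)_{jk} = −β_j·(∏_{i=j+1}^{k-2}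 α_i)·γ_{k-1} for k > j+1 satisfies the quasiseparable generator representation (M̃)_{jk} = g_j·b_{j+1}⋯b_{k-1}·h for all k > j+1, so M̃ is upper triangular 2-quasiseparable. -/
open Matrix Finset

/-- Ordered product `b a * b (a+1) * ⋯ * b (k-1)` of `2 × 2` matrices. -/
noncomputable def genProd (b : ℕ → Matrix (Fin 2) (Fin 2) ℂ) (a k : ℕ) :
    Matrix (Fin 2) (Fin 2) ℂ :=
  ((List.range (k - a)).map (fun m => b (a + m))).prod

lemma genProd_succ (b : ℕ → Matrix (Fin 2) (Fin 2) ℂ) (a k : ℕ) (h : a ≤ k) :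
    genProd b a (k + 1) = genProd b a k * b k := by
  unfold genProd
  rw [show k + 1 - a = (k - a) + 1 by omega, List.range_succ, List.map_append,
    List.prod_append]
  simp [show a + (k - a) = k by omega]

lemma genProd_formula (b : ℕ → Matrix (Fin 2) (Fin 2) ℂ) (α γ : ℕ → ℂ)
    (hb : ∀ i, b i = !![0, 0; γ i, α i]) (a k : ℕ) (h : a < k) :
    genProd b a k =
      !![0, 0; (∏ m ∈ Finset.Ico a (k - 1), α m) * γ (k - 1),
        ∏ m ∈ Finset.Ico a k, α m] := by
  induction k with
  | zero => omega
  | succ k ih =>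
    rcases Nat.lt_or_ge a k with hk | hk
    · rw [genProd_succ b a k (by omega), ih hk, hb k]
      have h1 : Finset.Ico a (k + 1 - 1) = Finset.Ico a k := by rw [Nat.add_sub_cancel]
      have h2 : k + 1 - 1 = k := by omega
      have h3 : ∏ m ∈ Finset.Ico a (k+1), α m = (∏ m ∈ Finset.Ico a k, α m) * α k := by
        exact Finset.prod_Ico_succ_top (Nat.le_of_lt hk) _
      have h4 : ∏ m ∈ Finset.Ico a k, α m
          = (∏ m ∈ Finset.Ico a (k-1), α m) * α (k-1) := by
        conv_lhs => rw [show k = (k - 1) + 1 by omega]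
        exact Finset.prod_Ico_succ_top (by omega) _
      rw [h1, h2, h3, h4]
      ext i j
      fin_cases i <;> fin_cases j <;>
        simp [Matrix.mul_apply, Fin.sum_univ_two] <;> ring
    · have ha : a = k := by omega
      subst ha
      rw [genProd_succ b a a le_rfl]
      unfold genProd
      simp [hb a]

/-- the quasiseparable generators `g_j = (t_j, -β_j)`,
`b_i = [[0,0],[γ_i, α_i]]`, `h = (1,0)ᵀ` satisfy
`g_j b_{j+1} ⋯ b_{k-1} h = -β_j (∏_{i=j+1}^{k-2} α_i) γ_{k-1}` for
`1 ≤ j`, `j+1 < k ≤ n`; consequently the unit upper triangular matrix `M`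
with superdiagonal entries `t_j` and entries
`-β_j (∏_{i=j+1}^{k-2} α_i) γ_{k-1}` above the superdiagonal admits the
2-quasiseparable generator representation. -/
theorem quasiseparable_generators_M (n : ℕ) (hn : 1 ≤ n) (t α β γ : ℕ → ℂ)
    (g : ℕ → Fin 2 → ℂ) (hg : ∀ j, g j = ![t j, -β j])
    (b : ℕ → Matrix (Fin 2) (Fin 2) ℂ) (hb : ∀ i, b i = !![0, 0; γ i, α i])
    (hvec : Fin 2 → ℂ) (hh : hvec = ![1, 0])
    (M : Matrix (Fin n) (Fin n) ℂ)
    (hM : ∀ i j : Fin n, M i j =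
      if (j : ℕ) < (i : ℕ) then 0
      else if (j : ℕ) = (i : ℕ) then 1
      else if (j : ℕ) = (i : ℕ) + 1 then t ((i : ℕ) + 1)
      else -β ((i : ℕ) + 1) * (∏ m ∈ Finset.Ico ((i : ℕ) + 2) (j : ℕ), α m) * γ (j : ℕ)) :
    (∀ j k : ℕ, 1 ≤ j → j + 1 < k → k ≤ n →
      g j ⬝ᵥ (genProd b (j + 1) k).mulVec hvec
        = -β j * (∏ i ∈ Finset.Ico (j + 1) (k - 1), α i) * γ (k - 1)) ∧
    (∀ i j : Fin n, (i : ℕ) + 1 < (j : ℕ) →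
      M i j = g ((i : ℕ) + 1) ⬝ᵥ (genProd b ((i : ℕ) + 2) ((j : ℕ) + 1)).mulVec hvec) ∧
    (∀ i j : Fin n, (j : ℕ) = (i : ℕ) + 1 →
      M i j = g ((i : ℕ) + 1) ⬝ᵥ hvec) := by
  have key : ∀ j k : ℕ, 1 ≤ j → j + 1 < k → k ≤ n →
      g j ⬝ᵥ (genProd b (j + 1) k).mulVec hvec
        = -β j * (∏ i ∈ Finset.Ico (j + 1) (k - 1), α i) * γ (k - 1) := by
    intro j k _ hjk _
    rw [genProd_formula b α γ hb (j+1) k (by omega), hg, hh]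
    simp [Matrix.mulVec, dotProduct, Fin.sum_univ_two]
    ring
  refine ⟨key, ?_, ?_⟩
  · intro i j hij
    have hjn : (j : ℕ) < n := j.isLt
    rw [key ((i : ℕ) + 1) ((j : ℕ) + 1) (by omega) (by omega) (by omega), hM]
    rw [if_neg (by omega), if_neg (by omega), if_neg (by omega)]
    simp only [Nat.add_sub_cancel]
  · intro i j hij
    rw [hM, if_neg (by omega), if_neg (by omega), if_pos hij, hg, hh]
    simp [dotProduct, Fin.sum_univ_two]
end

section
/- Let the polynomials {Q_k}_{k=0}^{n-1} and auxiliary polynomials {G_k}_{k=0}^{n-1} over ℂ satisfy Szegő-type (semiseparable) two-term recurrence relations with coefficients α_k, β_k, γ_k, δ_k, θ_k, assume G₀ = Q₀, and set β₀ = 1. Then for every k = 1, …, n−1: Q_k(x) = (δ_k·x + θ_k + γ_k·β_{k-1})·Q_{k-1}(x) + Σ_{j=0}^{k-2} γ_k·β_j·(∏_{i=j+1}^{k-1} (α_i − β_i·γ_i))·Q_j(x). Equivalently, Q satisfies general recurrence relations with τ_k = δ_k, a_{k-1,k} = −(θ_k + γ_k·β_{k-1}), and a_{j,k} = −β_j·(∏_{i=j+1}^{k-1}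 (α_i − β_i·γ_i))·γ_k for j < k−1. -/
open Polynomial Finset

lemma szego_G_expand (n : ℕ) (α β γ δ θ : ℕ → ℂ)
    (Q G : ℕ → Polynomial ℂ)
    (hG0 : G 0 = Q 0) (hβ0 : β 0 = 1)
    (hrec : ∀ k, 1 ≤ k → k ≤ n - 1 →
      G k = C (α k) * G (k - 1) + C (β k) * (C (δ k) * X + C (θ k)) * Q (k - 1) ∧
      Q k = C (γ k) * G (k - 1) + (C (δ k) * X + C (θ k)) * Q (k - 1)) :
    ∀ m, m ≤ n - 1 →
      G m = ∑ j ∈ Finset.range (m + 1),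
        C (β j * ∏ i ∈ Finset.Ico (j + 1) (m + 1), (α i - β i * γ i)) * Q j := by
  intro m
  induction m with
  | zero => intro _; simp [hG0, hβ0]
  | succ m IH =>
    intro hm
    obtain ⟨h1, h2⟩ := hrec (m + 1) (by omega) (by omega)
    simp only [Nat.add_sub_cancel] at h1 h2
    have key : ∀ j ∈ Finset.range (m + 1),
        C (β j * ∏ i ∈ Finset.Ico (j + 1) (m + 1 + 1), (α i - β i * γ i)) * Q j
        = C (α (m + 1) - β (m + 1) * γ (m + 1)) *
          (C (β j * ∏ i ∈ Finset.Ico (j + 1) (m + 1), (α i - β i * γ i)) * Q j) := by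
      intro j hj
      simp only [Finset.mem_range] at hj
      rw [Finset.prod_Ico_succ_top (by omega : j + 1 ≤ m + 1),
        show β j * ((∏ i ∈ Finset.Ico (j + 1) (m + 1), (α i - β i * γ i)) *
            (α (m + 1) - β (m + 1) * γ (m + 1)))
          = (α (m + 1) - β (m + 1) * γ (m + 1)) *
            (β j * ∏ i ∈ Finset.Ico (j + 1) (m + 1), (α i - β i * γ i)) from by ring,
        C_mul, mul_assoc]
    rw [h1, IH (by omega)]
    conv_rhs => rw [Finset.sum_range_succ]
    rw [Finset.sum_congr rfl key, ← Finset.mul_sum, Finset.Ico_self,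
      Finset.prod_empty, h2, IH (by omega)]
    simp only [map_sub, map_mul, mul_one]
    ring

/-- semiseparable polynomials satisfying Szegő-type two-term
recurrence relations (with auxiliary polynomials `G`, `G 0 = Q 0`, `β 0 = 1`)
satisfy the general recurrence relations
`Q k = (δ k • x + θ k + γ k β (k-1)) * Q (k-1)
      + ∑_{j=0}^{k-2} γ k β j (∏_{i=j+1}^{k-1} (α i - β i γ i)) * Q j`,
i.e. with `τ k = δ k`, `a (k-1) k = -(θ k + γ k β (k-1))`, and
`a j k = -β j (∏_{i=j+1}^{k-1} (α i - β i γ i)) γ k` for `j < k - 1`. -/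
theorem szego_to_general_recurrence (n : ℕ) (α β γ δ θ : ℕ → ℂ)
    (Q G : ℕ → Polynomial ℂ)
    (hG0 : G 0 = Q 0) (hβ0 : β 0 = 1)
    (hrec : ∀ k, 1 ≤ k → k ≤ n - 1 →
      G k = C (α k) * G (k - 1) + C (β k) * (C (δ k) * X + C (θ k)) * Q (k - 1) ∧
      Q k = C (γ k) * G (k - 1) + (C (δ k) * X + C (θ k)) * Q (k - 1)) :
    ∀ k, 1 ≤ k → k ≤ n - 1 →
      Q k = (C (δ k) * X + C (θ k + γ k * β (k - 1))) * Q (k - 1)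
        + ∑ j ∈ Finset.range (k - 1),
            C (γ k * β j * (∏ i ∈ Finset.Ico (j + 1) k, (α i - β i * γ i))) * Q j := by
  intro k hk1 hk2
  obtain ⟨m, rfl⟩ : ∃ m, k = m + 1 := ⟨k - 1, by omega⟩
  obtain ⟨_, h2⟩ := hrec (m + 1) (by omega) (by omega)
  simp only [Nat.add_sub_cancel] at h2 ⊢
  rw [h2, szego_G_expand n α β γ δ θ Q G hG0 hβ0 hrec m (by omega),
    Finset.sum_range_succ, Finset.Ico_self, Finset.prod_empty]
  have key : ∀ j ∈ Finset.range m,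
      C (γ (m + 1) * β j * ∏ i ∈ Finset.Ico (j + 1) (m + 1), (α i - β i * γ i)) * Q j
      = C (γ (m + 1)) *
        (C (β j * ∏ i ∈ Finset.Ico (j + 1) (m + 1), (α i - β i * γ i)) * Q j) := by
    intro j _
    rw [show γ (m + 1) * β j * ∏ i ∈ Finset.Ico (j + 1) (m + 1), (α i - β i * γ i)
        = γ (m + 1) * (β j * ∏ i ∈ Finset.Ico (j + 1) (m + 1), (α i - β i * γ i)) from by ring,
      C_mul, mul_assoc]
  rw [Finset.sum_congr rfl key, ← Finset.mul_sum]
  simp only [map_add, map_mul, mul_one]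
  ring
end

section
/- Let n ≥ 1 and t_j, α_i, β_j, γ_i ∈ ℂ with the convention β₀ = 1. Define the row vectors g_j = (t_j, −β_{j-1}) ∈ ℂ^{1×2} for j = 1, …, n−1, the 2×2 matrices b_i = [[0, 0], [γ_i·(α_{i-1} − β_{i-1}·γ_{i-1}), α_{i-1} − β_{i-1}·γ_{i-1}]] for i = 2, …, n−1, and the column vector h = (1, 0)ᵀ. Then for all indices with 1 ≤ j and j+1 < k ≤ n: g_j·b_{j+1}·b_{j+2}⋯b_{k-1}·h = −β_{j-1}·(∏_{i=j}^{k-2} (α_i − β_i·γ_i))·γ_{k-1}. Consequently, the unit upper triangular n×n matrix with superdiagonal entries t_j and (j,k) entries −β_{j-1}·(∏_{i=j}^{k-2}(α_i − β_i·γ_i))·γ_{k-1} for k > j+1 is upper triangular 2-quasiseparable with these generators. -/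
open Matrix Finset

lemma genProd_single (b : ℕ → Matrix (Fin 2) (Fin 2) ℂ) (a : ℕ) :
    genProd b a (a + 1) = b a := by
  simp [genProd, List.range_succ]

lemma genProd_succ_left (b : ℕ → Matrix (Fin 2) (Fin 2) ℂ) (a k : ℕ) (h : a < k) :
    genProd b a k = b a * genProd b (a + 1) k := by
  have h1 : k - a = (k - (a + 1)) + 1 := by omega
  rw [genProd, genProd, h1, List.range_succ_eq_map]
  rw [List.map_cons, List.prod_cons, List.map_map]
  have h2 : (fun m => b (a + m)) ∘ Nat.succ = fun m => b (a + 1 + m) := by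
    funext m
    simp only [Function.comp, Nat.succ_eq_add_one]
    ring_nf
  rw [h2, Nat.add_zero]

lemma bmulVec (α β γ : ℕ → ℂ) (b : ℕ → Matrix (Fin 2) (Fin 2) ℂ)
    (hb : ∀ i, b i = !![0, 0;
      γ i * (α (i - 1) - β (i - 1) * γ (i - 1)), α (i - 1) - β (i - 1) * γ (i - 1)])
    (a : ℕ) (u v : ℂ) :
    (b a).mulVec ![u, v]
      = ![0, γ a * (α (a - 1) - β (a - 1) * γ (a - 1)) * u
            + (α (a - 1) - β (a - 1) * γ (a - 1)) * v] := by
  funext i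
  fin_cases i <;>
    simp [hb a, Matrix.mulVec, dotProduct, Fin.sum_univ_two]

lemma genProd_key (α β γ : ℕ → ℂ) (b : ℕ → Matrix (Fin 2) (Fin 2) ℂ)
    (hb : ∀ i, b i = !![0, 0;
      γ i * (α (i - 1) - β (i - 1) * γ (i - 1)), α (i - 1) - β (i - 1) * γ (i - 1)]) :
    ∀ d a : ℕ, 1 ≤ a →
      (genProd b a (a + d + 1)).mulVec ![1, 0]
        = ![0, (∏ i ∈ Finset.Ico (a - 1) (a + d), (α i - β i * γ i)) * γ (a + d)] := by
  intro d
  induction d with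
  | zero =>
    intro a ha
    simp only [Nat.add_zero]
    rw [genProd_single, bmulVec α β γ b hb]
    have hIco : Finset.Ico (a - 1) a = {a - 1} := by
      rw [← Nat.Ico_succ_singleton]
      congr 1
      omega
    rw [hIco, Finset.prod_singleton]
    funext i
    fin_cases i
    · simp
    · simp
      ring
  | succ d ih =>
    intro a ha
    have hlt : a < a + (d + 1) + 1 := by omega
    rw [genProd_succ_left b a _ hlt, ← Matrix.mulVec_mulVec]
    have h2 : a + 1 + d + 1 = a + (d + 1) + 1 := by omega
    have h3 := ih (a + 1) (by omega)
    rw [h2] at h3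
    rw [h3, bmulVec α β γ b hb]
    have h4 : a + 1 - 1 = a := by omega
    have h5 : a + 1 + d = a + (d + 1) := by omega
    rw [h4, h5]
    have h6 : (∏ i ∈ Finset.Ico (a - 1) (a + (d + 1)), (α i - β i * γ i))
        = (α (a - 1) - β (a - 1) * γ (a - 1))
          * ∏ i ∈ Finset.Ico a (a + (d + 1)), (α i - β i * γ i) := by
      have h7 : a - 1 < a + (d + 1) := by omega
      rw [Finset.prod_eq_prod_Ico_succ_bot h7, show a - 1 + 1 = a by omega]
    rw [h6]
    funext i
    fin_cases i
    · simp
    · simp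
      ring
/-- the semiseparable generators `g_j = (t_j, -β_{j-1})`,
`b_i = [[0,0],[γ_i (α_{i-1} - β_{i-1} γ_{i-1}), α_{i-1} - β_{i-1} γ_{i-1}]]`,
`h = (1,0)ᵀ` (with the convention `β 0 = 1`) satisfy
`g_j b_{j+1} ⋯ b_{k-1} h = -β_{j-1} (∏_{i=j}^{k-2} (α_i - β_i γ_i)) γ_{k-1}`
for `1 ≤ j`, `j+1 < k ≤ n`; consequently the corresponding unit upper
triangular matrix `M` is 2-quasiseparable with these generators. -/
theorem semiseparable_generators_M (n : ℕ) (hn : 1 ≤ n) (t α β γ : ℕ → ℂ)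
    (hβ0 : β 0 = 1)
    (g : ℕ → Fin 2 → ℂ) (hg : ∀ j, g j = ![t j, -β (j - 1)])
    (b : ℕ → Matrix (Fin 2) (Fin 2) ℂ)
    (hb : ∀ i, b i = !![0, 0;
      γ i * (α (i - 1) - β (i - 1) * γ (i - 1)), α (i - 1) - β (i - 1) * γ (i - 1)])
    (hvec : Fin 2 → ℂ) (hh : hvec = ![1, 0])
    (M : Matrix (Fin n) (Fin n) ℂ)
    (hM : ∀ i j : Fin n, M i j =
      if (j : ℕ) < (i : ℕ) then 0
      else if (j : ℕ) = (i : ℕ) then 1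
      else if (j : ℕ) = (i : ℕ) + 1 then t ((i : ℕ) + 1)
      else -β (i : ℕ) *
        (∏ m ∈ Finset.Ico ((i : ℕ) + 1) (j : ℕ), (α m - β m * γ m)) * γ (j : ℕ)) :
    (∀ j k : ℕ, 1 ≤ j → j + 1 < k → k ≤ n →
      g j ⬝ᵥ (genProd b (j + 1) k).mulVec hvec
        = -β (j - 1) * (∏ i ∈ Finset.Ico j (k - 1), (α i - β i * γ i)) * γ (k - 1)) ∧
    (∀ i j : Fin n, (i : ℕ) + 1 < (j : ℕ) →
      M i j = g ((i : ℕ) + 1) ⬝ᵥ (genProd b ((i : ℕ) + 2) ((j : ℕ) + 1)).mulVec hvec) ∧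
    (∀ i j : Fin n, (j : ℕ) = (i : ℕ) + 1 →
      M i j = g ((i : ℕ) + 1) ⬝ᵥ hvec) := by
  have part1 : ∀ j k : ℕ, 1 ≤ j → j + 1 < k → k ≤ n →
      g j ⬝ᵥ (genProd b (j + 1) k).mulVec hvec
        = -β (j - 1) * (∏ i ∈ Finset.Ico j (k - 1), (α i - β i * γ i)) * γ (k - 1) := by
    intro j k hj hjk hkn
    have hk : k = (j + 1) + (k - j - 2) + 1 := by omega
    have hkey := genProd_key α β γ b hb (k - j - 2) (j + 1) (by omega)
    rw [← hk] at hkey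
    have h1 : j + 1 - 1 = j := by omega
    have h2 : j + 1 + (k - j - 2) = k - 1 := by omega
    rw [h1, h2] at hkey
    rw [hh, hkey, hg]
    simp [dotProduct, Fin.sum_univ_two]
    ring
  refine ⟨part1, ?_, ?_⟩
  · intro i j hij
    have hjn : (j : ℕ) + 1 ≤ n := j.isLt
    have := part1 ((i : ℕ) + 1) ((j : ℕ) + 1) (by omega) (by omega) hjn
    have e1 : (i : ℕ) + 1 - 1 = (i : ℕ) := by omega
    have e2 : (j : ℕ) + 1 - 1 = (j : ℕ) := by omega
    have e3 : (i : ℕ) + 1 + 1 = (i : ℕ) + 2 := by omega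
    rw [e1, e2, e3] at this
    rw [this, hM i j]
    have h1 : ¬ ((j : ℕ) < (i : ℕ)) := by omega
    have h2 : ¬ ((j : ℕ) = (i : ℕ)) := by omega
    have h3 : ¬ ((j : ℕ) = (i : ℕ) + 1) := by omega
    rw [if_neg h1, if_neg h2, if_neg h3]
  · intro i j hij
    rw [hM i j, hg, hh]
    have h1 : ¬ ((j : ℕ) < (i : ℕ)) := by omega
    have h2 : ¬ ((j : ℕ) = (i : ℕ)) := by omega
    rw [if_neg h1, if_neg h2, if_pos hij]
    simp [dotProduct, Fin.sum_univ_two]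
end

section
/- Let the polynomials {Q_k}_{k=0}^{n-1} over ℂ satisfy well-free (generalized three-term) recurrence relations with coefficients α_k, β_k, γ_k, δ_k, where every α_k ≠ 0, with the conventions α₀ = 1 and β₁ = 0. Define d_m = δ_m/α_m + β_m/(α_{m-1}·α_m), g_m = (d_m·β_{m+1} + γ_{m+1})/α_{m+1}, and b_m = β_{m+1}/α_{m+1}. Then for every k = 2, …, n−1: Q_k(x) = α_k·x·Q_{k-1}(x) − (δ_k + β_k/α_{k-1})·Q_{k-1}(x) − (d_{k-1}·β_k + γ_k)·Q_{k-2}(x) − β_k·Σ_{j=0}^{k-3} g_{j+1}·(∏_{i=j+2}^{k-2} b_i)·Q_j(x). Equivalently, Q satisfies general recurrence relations with τ_k = α_k, a_{k-1,k} = δ_k + β_k/α_{k-1}, a_{k-2,k} = d_{k-1}·β_k + γ_k, and a_{j,k} = g_{j+1}·(∏_{i=j+2}^{k-2} b_i)·β_k for j ≤ k−3. -/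
open Polynomial Finset

/-- well-free polynomials satisfying generalized three-term
recurrence relations (with `α k ≠ 0`, conventions `α 0 = 1`, `β 1 = 0`) satisfy
the general recurrence relations with `τ k = α k`,
`a (k-1) k = δ k + β k / α (k-1)`, `a (k-2) k = d (k-1) β k + γ k`, and
`a j k = g (j+1) (∏_{i=j+2}^{k-2} b i) β k` for `j ≤ k - 3`, where
`d m = δ m / α m + β m / (α (m-1) α m)`,
`g m = (d m β (m+1) + γ (m+1)) / α (m+1)` and `b m = β (m+1) / α (m+1)`. -/
theorem wellfree_to_general_recurrence (n : ℕ) (α β γ δ : ℕ → ℂ)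
    (hα : ∀ k, α k ≠ 0) (hα0 : α 0 = 1) (hβ1 : β 1 = 0)
    (Q : ℕ → Polynomial ℂ)
    (hQ1 : Q 1 = (C (α 1) * X - C (δ 1)) * Q 0)
    (hrec : ∀ k, 2 ≤ k → k ≤ n - 1 →
      Q k = (C (α k) * X - C (δ k)) * Q (k - 1) - (C (β k) * X + C (γ k)) * Q (k - 2))
    (d g b : ℕ → ℂ)
    (hd : ∀ m, d m = δ m / α m + β m / (α (m - 1) * α m))
    (hg : ∀ m, g m = (d m * β (m + 1) + γ (m + 1)) / α (m + 1))
    (hb : ∀ m, b m = β (m + 1) / α (m + 1)) :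
    ∀ k, 2 ≤ k → k ≤ n - 1 →
      Q k = C (α k) * X * Q (k - 1)
        - C (δ k + β k / α (k - 1)) * Q (k - 1)
        - C (d (k - 1) * β k + γ k) * Q (k - 2)
        - C (β k) * ∑ j ∈ Finset.range (k - 2),
            C (g (j + 1) * ∏ i ∈ Finset.Ico (j + 2) (k - 1), b i) * Q j := by
  -- auxiliary identity : `α m · x · Q_{m-1} = Q_m + α_m d_m Q_{m-1} + α_m Σ ...`
  have aux : ∀ m, 1 ≤ m → m ≤ n - 1 →
      C (α m) * (X * Q (m - 1)) = Q m + C (α m * d m) * Q (m - 1)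
        + C (α m) * ∑ j ∈ Finset.range (m - 1),
            C (g (j + 1) * ∏ i ∈ Finset.Ico (j + 2) m, b i) * Q j := by
    intro m hm
    induction m, hm using Nat.le_induction with
    | base =>
      intro _
      have h1 : α 1 * d 1 = δ 1 := by
        rw [hd]
        simp only [hβ1, hα0]
        field_simp
        rw [add_zero]
        exact mul_div_cancel_left₀ (δ 1) (hα 1)
      simp only [Nat.sub_self, Finset.range_zero, Finset.sum_empty, mul_zero, add_zero,
        show (1:ℕ) - 1 = 0 from rfl, hQ1, h1]
      ring
    | succ p hp IH =>
      intro hle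
      obtain ⟨q, rfl⟩ : ∃ q, p = q + 1 := ⟨p - 1, (Nat.succ_pred_eq_of_pos hp).symm⟩
      have IH' := IH (by omega)
      simp only [Nat.add_sub_cancel] at IH'
      have hr := hrec (q + 2) (by omega) hle
      simp only [show q + 2 - 1 = q + 1 from rfl, show q + 2 - 2 = q from rfl] at hr
      simp only [show q + 1 + 1 = q + 2 from rfl, show q + 2 - 1 = q + 1 from rfl]
      have hsum : ∑ j ∈ Finset.range (q + 1),
            C (g (j + 1) * ∏ i ∈ Finset.Ico (j + 2) (q + 2), b i) * Q j
          = C (g (q + 1)) * Q q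
            + C (b (q + 1)) * ∑ j ∈ Finset.range q,
                C (g (j + 1) * ∏ i ∈ Finset.Ico (j + 2) (q + 1), b i) * Q j := by
        rw [Finset.sum_range_succ, Finset.Ico_self, Finset.prod_empty, mul_one,
          Finset.mul_sum, add_comm]
        congr 1
        refine Finset.sum_congr rfl fun j hj => ?_
        have hjq : j + 2 ≤ q + 1 := by
          have := Finset.mem_range.mp hj; omega
        rw [Finset.prod_Ico_succ_top hjq]
        simp only [C_mul]
        ring
      have e1 : α (q + 1) * (α (q + 2) * d (q + 2)) = α (q + 1) * δ (q + 2) + β (q + 2) := by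
        rw [hd (q + 2)]
        try simp only [show q + 2 - 1 = q + 1 from rfl]
        field_simp [hα (q + 1), hα (q + 2)]
      have e2 : α (q + 2) * g (q + 1) = d (q + 1) * β (q + 2) + γ (q + 2) := by
        rw [hg (q + 1)]
        simp only [show q + 1 + 1 = q + 2 from rfl]
        exact mul_div_cancel₀ _ (hα (q + 2))
      have e3 : α (q + 2) * b (q + 1) = β (q + 2) := by
        rw [hb (q + 1)]
        simp only [show q + 1 + 1 = q + 2 from rfl]
        exact mul_div_cancel₀ _ (hα (q + 2))
      have ce1 := congrArg (fun z : ℂ => (C z : Polynomial ℂ)) e1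
      have ce2 := congrArg (fun z : ℂ => (C z : Polynomial ℂ)) e2
      have ce3 := congrArg (fun z : ℂ => (C z : Polynomial ℂ)) e3
      simp only [C_mul, C_add] at ce1 ce2 ce3
      have hne : (C (α (q + 1)) : Polynomial ℂ) ≠ 0 := by
        simpa using hα (q + 1)
      apply mul_left_cancel₀ hne
      rw [hr, hsum]
      simp only [C_mul, C_add] at IH' hsum ⊢
      linear_combination C (β (q + 2)) * IH' - Q (q + 1) * ce1
        - Q q * C (α (q + 1)) * ce2
        - (∑ j ∈ Finset.range q,
            C (g (j + 1)) * C (∏ i ∈ Finset.Ico (j + 2) (q + 1), b i) * Q j)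
          * C (α (q + 1)) * ce3
  intro k hk hkn
  obtain ⟨q, rfl⟩ : ∃ q, k = q + 2 := ⟨k - 2, by omega⟩
  have A := aux (q + 1) (by omega) (by omega)
  simp only [Nat.add_sub_cancel] at A
  have hr := hrec (q + 2) (by omega) hkn
  simp only [show q + 2 - 1 = q + 1 from rfl, show q + 2 - 2 = q from rfl] at hr ⊢
  have f1 : α (q + 1) * (β (q + 2) / α (q + 1)) = β (q + 2) := by
    exact mul_div_cancel₀ _ (hα (q + 1))
  have cf1 := congrArg (fun z : ℂ => (C z : Polynomial ℂ)) f1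
  simp only [C_mul] at cf1
  have hne : (C (α (q + 1)) : Polynomial ℂ) ≠ 0 := by
    simpa using hα (q + 1)
  apply mul_left_cancel₀ hne
  rw [hr]
  simp only [C_mul, C_add] at A cf1 ⊢
  linear_combination (-(C (β (q + 2)))) * A + Q (q + 1) * cf1
end

section
/- Let n ≥ 2 and α_m, β_m, γ_m, δ_m, θ_m ∈ ℂ with all δ_m ≠ 0. Define the general-recurrence coefficients of quasiseparable polynomials by a_{j,k} = −β_{j+1}·(∏_{i=j+2}^{k-1} α_i)·γ_k for j < k−1 and a_{k-1,k} = −θ_k, with τ_k = δ_k, and define the hat coefficients â_{j,k} = (δ_{n-k}/δ_{n-j})·a_{n-k,n-j} for j < k. Define the hat generators α̂_k = α_{n-k+1}, β̂_k = γ_{n-k+1}/δ_{n-k+1}, γ̂_k = β_{n-k+1}·δ_{n-k}, δ̂_k = δ_{n-k}, θ̂_k = (δ_{n-k}/δ_{n-k+1})·θ_{n-k+1}. Then for all indices 0 ≤ j < k−1 ≤ n−2: â_{j,k} = −β̂_{j+1}·(∏_{i=j+2}^{k-1} α̂_i)·γ̂_k, and for j = k−1: â_{k-1,k} = −θ̂_k.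 In other words, the generalized associated polynomials of a quasiseparable system are again quasiseparable, satisfying EGO-type recurrences with the hat generators. -/
open Finset

/-- the generalized associated polynomials of a quasiseparable
system are again quasiseparable.  With the general-recurrence coefficients
`a j k = -β (j+1) (∏_{i=j+2}^{k-1} α i) γ k` (for `j < k-1`),
`a (k-1) k = -θ k`, the hat coefficients
`ahat j k = (δ (n-k) / δ (n-j)) * a (n-k) (n-j)`, and the hat generators
`α̂ k = α (n-k+1)`, `β̂ k = γ (n-k+1)/δ (n-k+1)`, `γ̂ k = β (n-k+1) δ (n-k)`,
`δ̂ k = δ (n-k)`, `θ̂ k = (δ (n-k)/δ (n-k+1)) θ (n-k+1)`, we have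
`ahat j k = -β̂ (j+1) (∏_{i=j+2}^{k-1} α̂ i) γ̂ k` for `j < k-1 ≤ n-2` and
`ahat (k-1) k = -θ̂ k`. -/
theorem associated_quasiseparable (n : ℕ) (hn : 2 ≤ n) (α β γ δ θ : ℕ → ℂ)
    (hδ : ∀ m, δ m ≠ 0)
    (a ahat : ℕ → ℕ → ℂ)
    (ha1 : ∀ j k, j + 1 < k →
      a j k = -β (j + 1) * (∏ i ∈ Finset.Ico (j + 2) k, α i) * γ k)
    (ha2 : ∀ k, 1 ≤ k → a (k - 1) k = -θ k)
    (hahat : ∀ j k, j < k → ahat j k = (δ (n - k) / δ (n - j)) * a (n - k) (n - j))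
    (αh βh γh δh θh : ℕ → ℂ)
    (hαh : ∀ k, αh k = α (n - k + 1))
    (hβh : ∀ k, βh k = γ (n - k + 1) / δ (n - k + 1))
    (hγh : ∀ k, γh k = β (n - k + 1) * δ (n - k))
    (hδh : ∀ k, δh k = δ (n - k))
    (hθh : ∀ k, θh k = (δ (n - k) / δ (n - k + 1)) * θ (n - k + 1)) :
    (∀ j k, j + 1 < k → k ≤ n - 1 →
      ahat j k = -βh (j + 1) * (∏ i ∈ Finset.Ico (j + 2) k, αh i) * γh k) ∧
    (∀ k, 1 ≤ k → k ≤ n - 1 → ahat (k - 1) k = -θh k) := by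
  constructor
  · intro j k hjk hkn
    rw [hahat j k (by omega), ha1 (n - k) (n - j) (by omega), hβh, hγh]
    have e1 : n - (j + 1) + 1 = n - j := by omega
    rw [e1]
    have hP : ∏ i ∈ Finset.Ico (j + 2) k, αh i
        = ∏ i ∈ Finset.Ico (n - k + 2) (n - j), α i := by
      simp only [hαh]
      refine Finset.prod_nbij' (fun i => n + 1 - i) (fun i => n + 1 - i) ?_ ?_ ?_ ?_ ?_ <;>
        intro i hi <;> simp only [Finset.mem_Ico] at * <;>
        first
          | omega
          | (congr 1; omega)
    rw [hP]
    field_simp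
  · intro k hk1 hkn
    rw [hahat (k - 1) k (by omega), hθh]
    have e1 : n - (k - 1) = n - k + 1 := by omega
    rw [e1]
    have h2 := ha2 (n - k + 1) (by omega)
    have e2 : n - k + 1 - 1 = n - k := by omega
    rw [e2] at h2
    rw [h2]
    ring
end

section
/- Let n ≥ 2 and α_m, β_m, γ_m, δ_m, θ_m ∈ ℂ with all δ_m ≠ 0. Define the general-recurrence coefficients of semiseparable polynomials by a_{j,k} = −β_j·(∏_{i=j+1}^{k-1} (α_i − β_i·γ_i))·γ_k for j < k−1 and a_{k-1,k} = −(θ_k + γ_k·β_{k-1}), with τ_k = δ_k, and define the hat coefficients â_{j,k} = (δ_{n-k}/δ_{n-j})·a_{n-k,n-j} for j < k. Define the hat generators α̂_k = α_{n-k}, β̂_k = γ_{n-k}/δ_{n-k}, γ̂_k = β_{n-k}·δ_{n-k}, δ̂_k = δ_{n-k}, θ̂_k = (δ_{n-k}/δ_{n-k+1})·θ_{n-k+1}. Then for all indices 0 ≤ j < k−1 ≤ n−2: â_{j,k} = −β̂_j·(∏_{i=j+1}^{k-1} (α̂_i − β̂_i·γ̂_i))·γ̂_k, and for j = k−1: â_{k-1,k}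 = −(θ̂_k + γ̂_k·β̂_{k-1}). In other words, the generalized associated polynomials of a semiseparable system are again semiseparable, satisfying Szegő-type two-term recurrences with the hat generators. -/
open Finset

/-- the generalized associated polynomials of a semiseparable
system are again semiseparable.  With the general-recurrence coefficients
`a j k = -β j (∏_{i=j+1}^{k-1} (α i - β i γ i)) γ k` (for `j < k-1`),
`a (k-1) k = -(θ k + γ k β (k-1))`, the hat coefficients
`ahat j k = (δ (n-k) / δ (n-j)) * a (n-k) (n-j)`, and the hat generators
`α̂ k = α (n-k)`, `β̂ k = γ (n-k)/δ (n-k)`, `γ̂ k = β (n-k) δ (n-k)`,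
`δ̂ k = δ (n-k)`, `θ̂ k = (δ (n-k)/δ (n-k+1)) θ (n-k+1)`, we have
`ahat j k = -β̂ j (∏_{i=j+1}^{k-1} (α̂ i - β̂ i γ̂ i)) γ̂ k` for `j < k-1 ≤ n-2`
and `ahat (k-1) k = -(θ̂ k + γ̂ k β̂ (k-1))`. -/
theorem associated_semiseparable (n : ℕ) (hn : 2 ≤ n) (α β γ δ θ : ℕ → ℂ)
    (hδ : ∀ m, δ m ≠ 0)
    (a ahat : ℕ → ℕ → ℂ)
    (ha1 : ∀ j k, j + 1 < k →
      a j k = -β j * (∏ i ∈ Finset.Ico (j + 1) k, (α i - β i * γ i)) * γ k)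
    (ha2 : ∀ k, 1 ≤ k → a (k - 1) k = -(θ k + γ k * β (k - 1)))
    (hahat : ∀ j k, j < k → ahat j k = (δ (n - k) / δ (n - j)) * a (n - k) (n - j))
    (αh βh γh δh θh : ℕ → ℂ)
    (hαh : ∀ k, αh k = α (n - k))
    (hβh : ∀ k, βh k = γ (n - k) / δ (n - k))
    (hγh : ∀ k, γh k = β (n - k) * δ (n - k))
    (hδh : ∀ k, δh k = δ (n - k))
    (hθh : ∀ k, θh k = (δ (n - k) / δ (n - k + 1)) * θ (n - k + 1)) :
    (∀ j k, j + 1 < k → k ≤ n - 1 →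
      ahat j k = -βh j * (∏ i ∈ Finset.Ico (j + 1) k, (αh i - βh i * γh i)) * γh k) ∧
    (∀ k, 1 ≤ k → k ≤ n - 1 → ahat (k - 1) k = -(θh k + γh k * βh (k - 1))) := by

  constructor
  · intro j k hjk hkn
    have hkn' : k < n := by omega
    rw [hahat j k (by omega), ha1 (n - k) (n - j) (by omega), hβh, hγh]
    have hprod : ∏ i ∈ Finset.Ico (j + 1) k, (αh i - βh i * γh i)
        = ∏ i ∈ Finset.Ico (n - k + 1) (n - j), (α i - β i * γ i) := by
      have h1 : ∀ i ∈ Finset.Ico (j + 1) k,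
          αh i - βh i * γh i = α (n - i) - β (n - i) * γ (n - i) := by
        intro i hi
        rw [hαh, hβh, hγh]
        have := hδ (n - i)
        field_simp
      rw [Finset.prod_congr rfl h1]
      refine Finset.prod_nbij' (fun i => n - i) (fun i => n - i) ?_ ?_ ?_ ?_ ?_
      · intro i hi
        simp only [Finset.mem_Ico] at hi ⊢
        omega
      · intro i hi
        simp only [Finset.mem_Ico] at hi ⊢
        omega
      · intro i hi
        simp only [Finset.mem_Ico] at hi
        omega
      · intro i hi
        simp only [Finset.mem_Ico] at hi
        omega
      · intro i hi
        simp only [Finset.mem_Ico] at hi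
        have : n - (n - i) = i := by omega
        simp only [this]
    rw [hprod]
    have h1 := hδ (n - j)
    field_simp
  · intro k hk hkn
    have hkn' : k < n := by omega
    have e1 : n - (k - 1) = n - k + 1 := by omega
    rw [hahat (k - 1) k (by omega), e1]
    have e2 := ha2 (n - k + 1) (by omega)
    simp only [Nat.add_sub_cancel] at e2
    rw [e2, hθh, hγh, hβh, e1]
    have h1 := hδ (n - k + 1)
    field_simp
end

section
/- Let n ≥ 2 and α_m, β_m, γ_m, δ_m, θ_m ∈ ℂ with δ_m ≠ 0 and β_m ≠ 0 for all relevant indices m. Define the hat coefficients α̂_k = δ_{n-k}, β̂_k = δ_{n-k}·α_{n-k+2}·β_{n-k+1}/β_{n-k+2}, δ̂_k = −(δ_{n-k}/δ_{n-k+1})·(θ_{n-k+1} + α_{n-k+2}·β_{n-k+1}/β_{n-k+2}), γ̂_k = (δ_{n-k}/δ_{n-k+2})·(β_{n-k+1}/β_{n-k+2})·(θ_{n-k+2}·α_{n-k+2} − β_{n-k+2}·γ_{n-k+2}). Then for all indices 0 ≤ j < k−1 ≤ n−2 the following identity holds: (α̂_k/α̂_{j+2})·[((δ̂_{j+1}/α̂_{j+1})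 + β̂_{j+1}/(α̂_j·α̂_{j+1}))·β̂_{j+2} + γ̂_{j+2}]·∏_{i=j+2}^{k-1} (β̂_{i+1}/α̂_{i+1}) = −(γ_{n-j}/δ_{n-j})·(∏_{i=j+2}^{k-1} α_{n-i+1})·β_{n-k+1}·δ_{n-k}; and for j = k−1: δ̂_k + β̂_k/α̂_{k-1} = −(δ_{n-k}/δ_{n-k+1})·θ_{n-k+1}. In other words, the generalized associated polynomials of a quasiseparable system with all β_k ≠ 0 satisfy well-free three-term recurrence relations with the hat coefficients. -/
open Finset

/-- the generalized associated polynomials of a quasiseparable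
system with all `β k ≠ 0` satisfy well-free three-term recurrence relations
with the hat coefficients
`α̂ k = δ (n-k)`, `β̂ k = δ (n-k) α (n-k+2) β (n-k+1) / β (n-k+2)`,
`δ̂ k = -(δ (n-k)/δ (n-k+1)) (θ (n-k+1) + α (n-k+2) β (n-k+1)/β (n-k+2))`,
`γ̂ k = (δ (n-k)/δ (n-k+2)) (β (n-k+1)/β (n-k+2))
        (θ (n-k+2) α (n-k+2) - β (n-k+2) γ (n-k+2))`:
the well-free general-recurrence coefficients built from the hats coincide with
the hat coefficients `â j k` of the quasiseparable system. -/
theorem associated_wellfree (n : ℕ) (hn : 2 ≤ n) (α β γ δ θ : ℕ → ℂ)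
    (hδ : ∀ m, δ m ≠ 0) (hβ : ∀ m, β m ≠ 0)
    (αh βh γh δh : ℕ → ℂ)
    (hαh : ∀ k, αh k = δ (n - k))
    (hβh : ∀ k, βh k = δ (n - k) * α (n - k + 2) * β (n - k + 1) / β (n - k + 2))
    (hδh : ∀ k, δh k = -(δ (n - k) / δ (n - k + 1)) *
        (θ (n - k + 1) + α (n - k + 2) * β (n - k + 1) / β (n - k + 2)))
    (hγh : ∀ k, γh k = (δ (n - k) / δ (n - k + 2)) * (β (n - k + 1) / β (n - k + 2)) *
        (θ (n - k + 2) * α (n - k + 2) - β (n - k + 2) * γ (n - k + 2))) :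
    (∀ j k, j + 1 < k → k ≤ n - 1 →
      (αh k / αh (j + 2)) *
          ((δh (j + 1) / αh (j + 1) + βh (j + 1) / (αh j * αh (j + 1))) * βh (j + 2)
            + γh (j + 2)) *
          (∏ i ∈ Finset.Ico (j + 2) k, (βh (i + 1) / αh (i + 1)))
        = -(γ (n - j) / δ (n - j)) * (∏ i ∈ Finset.Ico (j + 2) k, α (n - i + 1)) *
            (β (n - k + 1) * δ (n - k))) ∧
    (∀ k, 1 ≤ k → k ≤ n - 1 →
      δh k + βh k / αh (k - 1) = -(δ (n - k) / δ (n - k + 1)) * θ (n - k + 1)) := by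
  constructor
  · intro j k hjk hkn
    have hB : (δh (j + 1) / αh (j + 1) + βh (j + 1) / (αh j * αh (j + 1))) * βh (j + 2)
            + γh (j + 2)
        = -(δ (n - (j + 2)) * β (n - (j + 2) + 1) * γ (n - j)) / δ (n - j) := by
      rw [hδh, hβh, hβh, hγh, hαh, hαh]
      rw [show n - (j + 1) + 2 = n - j + 1 from by omega,
          show n - (j + 1) + 1 = n - j from by omega,
          show n - (j + 2) + 2 = n - j from by omega,
          show n - (j + 1) = n - (j + 2) + 1 from by omega]
      have h1 := hδ (n - (j + 2))
      have h2 := hδ (n - (j + 2) + 1)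
      have h3 := hδ (n - j)
      have h4 := hβ (n - (j + 2) + 1)
      have h5 := hβ (n - j)
      have h6 := hβ (n - j + 1)
      set a := δ (n - (j + 2)) with ha
      set b := δ (n - (j + 2) + 1) with hb
      set c := δ (n - j) with hc
      set p := β (n - (j + 2) + 1) with hp
      set q := β (n - j) with hq
      set r := β (n - j + 1) with hr
      have key : -(b / c) * (θ (n - j) + α (n - j + 1) * q / r) / b
            + b * α (n - j + 1) * q / r / (c * b) = -θ (n - j) / c := by
        field_simp
        ring
      rw [key]
      field_simp
      ring
    have hprod : ∀ m, j + 2 ≤ m → m ≤ n - 1 →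
        (∏ i ∈ Finset.Ico (j + 2) m, (βh (i + 1) / αh (i + 1)))
          = (∏ i ∈ Finset.Ico (j + 2) m, α (n - i + 1))
              * (β (n - m + 1) / β (n - (j + 2) + 1)) := by
      intro m hm
      induction m, hm using Nat.le_induction with
      | base =>
        intro _
        simp [Finset.Ico_self, div_self (hβ (n - (j + 2) + 1))]
      | succ m hm ih =>
        intro hm1
        rw [Finset.prod_Ico_succ_top hm, Finset.prod_Ico_succ_top hm, ih (by omega)]
        rw [hβh, hαh]
        rw [show n - (m + 1) + 2 = n - m + 1 from by omega,
            show n - (m + 1) + 1 = n - m from by omega]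
        have h1 := hδ (n - (m + 1))
        have h2 := hβ (n - m + 1)
        have h3 := hβ (n - (j + 2) + 1)
        field_simp
    rw [hB, hprod k (by omega) hkn, hαh k, hαh (j + 2)]
    have h1 := hδ (n - (j + 2))
    have h2 := hδ (n - j)
    have h3 := hβ (n - (j + 2) + 1)
    field_simp
  · intro k hk1 hkn
    rw [hδh, hβh, hαh]
    rw [show n - (k - 1) = n - k + 1 from by omega]
    have h1 := hδ (n - k + 1)
    have h2 := hβ (n - k + 2)
    field_simp
    ring
end

section
/- Let n ≥ 1, let d₂, …, dₙ ∈ ℂ, and define functions F₀, …, F_{n-1} : ℂ → ℂ by F_{n-1}(y) = 0 and F_k(y) = y·(F_{k+1}(y) + d_{k+2}) for k = n−2, …, 0. Let x₁, …, xₙ ∈ ℂ be nonzero, D_x = diag(x₁, …, xₙ), and let V_F(1/x) be the n×n matrix with (i,j) entry F_{j-1}(1/x_i). Then V_F(1/x)·Z₀ = D_x·V_F(1/x) − 𝟙·(d₂, d₃, …, dₙ, 0), where Z₀ is the n×n lower shift matrix and 𝟙·(d₂, …, dₙ, 0) denotes the rank-one matrix equal to the all-ones column vector times the row vector (d₂,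 d₃, …, dₙ, 0). -/
open Matrix

/-- displacement equation for the matrix `V_F(1/x)`,
where `F (n-1) = 0` and `F k y = y * (F (k+1) y + d (k+2))` for `k ≤ n-2`.
With `VF i j = F j (1/x i)` (0-indexed columns), `Z` the lower shift, and
`D_x = diagonal x`, we have
`VF * Z = D_x * VF - 𝟙 ⬝ (d 2, d 3, …, d n, 0)`. -/
theorem VF_displacement (n : ℕ) (hn : 1 ≤ n) (d : ℕ → ℂ) (F : ℕ → ℂ → ℂ)
    (hFtop : ∀ y, F (n - 1) y = 0)
    (hFrec : ∀ k, k + 2 ≤ n → ∀ y, F k y = y * (F (k + 1) y + d (k + 2)))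
    (x : Fin n → ℂ) (hx : ∀ i, x i ≠ 0)
    (Z VF : Matrix (Fin n) (Fin n) ℂ)
    (hZ : ∀ i j : Fin n, Z i j = if (i : ℕ) = (j : ℕ) + 1 then 1 else 0)
    (hVF : ∀ i j : Fin n, VF i j = F (j : ℕ) (x i)⁻¹) :
    VF * Z = Matrix.diagonal x * VF -
      Matrix.of (fun _ j : Fin n => if (j : ℕ) + 1 = n then 0 else d ((j : ℕ) + 2)) := by
  ext i j
  rw [Matrix.sub_apply, Matrix.mul_apply, Matrix.diagonal_mul]
  simp only [Matrix.of_apply, hZ, hVF, mul_ite, mul_one, mul_zero]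
  by_cases hj : (j : ℕ) + 1 = n
  · rw [if_pos hj, Finset.sum_eq_zero, sub_zero]
    · have hjn : (j : ℕ) = n - 1 := by omega
      rw [hjn, hFtop, mul_zero]
    · intro k _
      rw [if_neg]
      omega
  · have hjlt : (j : ℕ) + 1 < n := by omega
    rw [if_neg hj]
    rw [Finset.sum_eq_single (⟨(j : ℕ) + 1, hjlt⟩ : Fin n)]
    · simp only [if_pos, if_true]
      rw [hFrec j (by omega), mul_inv_cancel_left₀ (hx i)]
      ring
    · intro k _ hk
      rw [if_neg]
      intro h
      exact hk (Fin.ext h)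
    · intro h
      exact absurd (Finset.mem_univ _) h
end

section
/- Let Q = {Q₀, …, Q_{n-1}} be a system of polynomials over ℂ satisfying general recurrence relations with coefficients τ_k and a_{j,k}, with all τ_k ≠ 0 (so that deg Q_k = k), and let M_Q, N_Q be the associated recurrence-relation matrices and W_Q = N_Q·M_Q⁻¹. Let x₁, …, xₙ ∈ ℂ be nonzero, V_Q(x) the polynomial Vandermonde matrix, D_{1/x} = diag(1/x₁, …, 1/xₙ), and S_{PQ} the basis transformation matrix with (i,j) entry equal to the coefficient of x^{i-1} in Q_{j-1}(x). Let d₁, …, dₙ ∈ ℂ be arbitrary, define F_{n-1}(y) = 0 and F_k(y) = y·(F_{k+1}(y) + d_{k+2}) for k = n−2, …, 0, and let V_F(1/x) be the n×n matrix with (i,j) entry F_{j-1}(1/x_i). Then V_Q(x)·(Σ_{k=1}^{n} d_k·W_Q^{k-1}) = (Σ_{k=1}^{n} d_k·D_{1/x}^{k-1})·V_Q(x) − V_F(1/x)·S_{PQ}. -/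
open Matrix Polynomial Finset

private lemma fin_sum_pick {n : ℕ} (m : ℕ) (hm : m < n) (f : Fin n → ℂ) :
    (∑ j : Fin n, if (j : ℕ) = m then f j else 0) = f ⟨m, hm⟩ := by
  rw [Finset.sum_eq_single_of_mem (⟨m, hm⟩ : Fin n) (Finset.mem_univ _)
    (fun j _ hj => if_neg (fun h => hj (Fin.ext h)))]
  exact if_pos rfl

private def Jmat (n m : ℕ) : Matrix (Fin n) (Fin n) ℂ :=
  Matrix.of fun _ j => if (j : ℕ) = m then 1 else 0

private lemma Jmat_mul_apply {n m : ℕ} (hm : m < n) (X : Matrix (Fin n) (Fin n) ℂ)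
    (i k : Fin n) : (Jmat n m * X) i k = X ⟨m, hm⟩ k := by
  rw [Matrix.mul_apply]
  simp only [Jmat, Matrix.of_apply, ite_mul, one_mul, zero_mul]
  exact fin_sum_pick m hm _

/-- computation of the sums in the inversion formula.
For a polynomial system `Q` satisfying the general recurrence relations (with
all `τ k ≠ 0`), recurrence matrices `M`, `N`, `W_Q = N * M⁻¹`, nonzero nodes
`x i`, Vandermonde matrix `V`, basis transformation matrix `SPQ`, arbitrary
`d 1, …, d n`, Horner-type functions `F` and the matrix `VF`, we have
`V * (∑_{k=1}^n d k • W_Q^(k-1))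
  = (∑_{k=1}^n d k • D_{1/x}^(k-1)) * V - VF * SPQ`. -/
theorem sums_in_inversion_formula (n : ℕ) (hn : 1 ≤ n)
    (τ : ℕ → ℂ) (a : ℕ → ℕ → ℂ) (Q : ℕ → Polynomial ℂ)
    (hτ : ∀ k, τ k ≠ 0)
    (hQ0 : Q 0 = C (τ 0))
    (hQrec : ∀ k, 1 ≤ k → k ≤ n - 1 →
      Q k = C (τ k) * X * Q (k - 1) - ∑ j ∈ Finset.range k, C (a j k) * Q j)
    (x : Fin n → ℂ) (hx : ∀ i, x i ≠ 0)
    (M N V SPQ : Matrix (Fin n) (Fin n) ℂ)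
    (hM : ∀ i j : Fin n,
      M i j = if (i : ℕ) = (j : ℕ) then 1
              else if (i : ℕ) < (j : ℕ) then a (i : ℕ) (j : ℕ) else 0)
    (hN : ∀ i j : Fin n,
      N i j = if (j : ℕ) = (i : ℕ) + 1 then τ ((i : ℕ) + 1) else 0)
    (hV : ∀ i j : Fin n, V i j = (Q (j : ℕ)).eval (x i))
    (hSPQ : ∀ i j : Fin n, SPQ i j = (Q (j : ℕ)).coeff (i : ℕ))
    (d : ℕ → ℂ) (F : ℕ → ℂ → ℂ)
    (hFtop : ∀ y, F (n - 1) y = 0)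
    (hFrec : ∀ k, k + 2 ≤ n → ∀ y, F k y = y * (F (k + 1) y + d (k + 2)))
    (VF : Matrix (Fin n) (Fin n) ℂ)
    (hVF : ∀ i j : Fin n, VF i j = F (j : ℕ) (x i)⁻¹) :
    V * (∑ k ∈ Finset.range n, d (k + 1) • (N * M⁻¹) ^ k) =
      (∑ k ∈ Finset.range n, d (k + 1) • (Matrix.diagonal fun i => (x i)⁻¹) ^ k) * V
        - VF * SPQ := by
  have hn0 : 0 < n := hn
  set W : Matrix (Fin n) (Fin n) ℂ := N * M⁻¹ with hWdef
  set Dm : Matrix (Fin n) (Fin n) ℂ := Matrix.diagonal (fun i => (x i)⁻¹) with hDm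
  -- M is invertible
  have hMbt : M.BlockTriangular id := by
    intro i j hij
    have h2 : (j : ℕ) < (i : ℕ) := hij
    rw [hM, if_neg (by omega), if_neg (by omega)]
  have hdet : M.det = 1 := by
    rw [Matrix.det_of_upperTriangular hMbt]
    apply Finset.prod_eq_one
    intro i _
    rw [hM, if_pos rfl]
  have hMM : M * M⁻¹ = 1 := Matrix.mul_nonsing_inv M (hdet ▸ isUnit_one)
  -- generic column computations
  have genN : ∀ (g : ℕ → ℂ) (k : Fin n),
      (∑ j : Fin n, g (j : ℕ) * N j k)
        = if (k : ℕ) = 0 then 0 else τ (k : ℕ) * g ((k : ℕ) - 1) := by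
    intro g k
    simp only [hN]
    by_cases hk : (k : ℕ) = 0
    · rw [if_pos hk]
      apply Finset.sum_eq_zero
      intro j _
      rw [if_neg (by omega), mul_zero]
    · rw [if_neg hk]
      have hk1 : (k : ℕ) - 1 < n := lt_of_le_of_lt (Nat.sub_le _ _) k.isLt
      rw [show (∑ j : Fin n, g (j : ℕ) * if (k : ℕ) = (j : ℕ) + 1 then τ ((j : ℕ) + 1) else 0)
          = ∑ j : Fin n, if (j : ℕ) = (k : ℕ) - 1 then g (j : ℕ) * τ ((j : ℕ) + 1) else 0 from
        Finset.sum_congr rfl (fun j _ => by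
          by_cases h : (j : ℕ) = (k : ℕ) - 1
          · rw [if_pos h, if_pos (by omega)]
          · rw [if_neg h, if_neg (by omega), mul_zero])]
      rw [fin_sum_pick ((k : ℕ) - 1) hk1 (fun j => g (j : ℕ) * τ ((j : ℕ) + 1))]
      show g ((k : ℕ) - 1) * τ ((k : ℕ) - 1 + 1) = τ (k : ℕ) * g ((k : ℕ) - 1)
      rw [show (k : ℕ) - 1 + 1 = (k : ℕ) by omega, mul_comm]
  have genM : ∀ (g : ℕ → ℂ) (k : Fin n),
      (∑ j : Fin n, g (j : ℕ) * M j k)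
        = g (k : ℕ) + ∑ j ∈ Finset.range (k : ℕ), g j * a j (k : ℕ) := by
    intro g k
    simp only [hM]
    rw [Fin.sum_univ_eq_sum_range
      (fun t => g t * if t = (k : ℕ) then (1 : ℂ) else if t < (k : ℕ) then a t (k : ℕ) else 0) n]
    rw [← Finset.sum_range_add_sum_Ico _ (Nat.succ_le_of_lt k.isLt)]
    rw [Finset.sum_range_succ]
    rw [if_pos rfl, mul_one]
    rw [Finset.sum_eq_zero (s := Finset.Ico ((k : ℕ) + 1) n) (fun t ht => by
      rw [Finset.mem_Ico] at ht
      rw [if_neg (by omega), if_neg (by omega), mul_zero])]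
    rw [Finset.sum_congr rfl (fun t ht => show
        g t * (if t = (k : ℕ) then (1 : ℂ) else if t < (k : ℕ) then a t (k : ℕ) else 0)
          = g t * a t (k : ℕ) from by
      rw [Finset.mem_range] at ht
      rw [if_neg (by omega), if_pos ht])]
    ring
  -- entrywise products
  have hSPQM : ∀ (i k : Fin n), (SPQ * M) i k
      = (Q (k : ℕ)).coeff (i : ℕ)
        + ∑ j ∈ Finset.range (k : ℕ), (Q j).coeff (i : ℕ) * a j (k : ℕ) := by
    intro i k
    rw [Matrix.mul_apply]
    simp only [hSPQ]
    exact genM (fun t => (Q t).coeff (i : ℕ)) k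
  have hSPQN : ∀ (i k : Fin n), (SPQ * N) i k
      = if (k : ℕ) = 0 then 0 else τ (k : ℕ) * (Q ((k : ℕ) - 1)).coeff (i : ℕ) := by
    intro i k
    rw [Matrix.mul_apply]
    simp only [hSPQ]
    exact genN (fun t => (Q t).coeff (i : ℕ)) k
  have hVM : ∀ (i k : Fin n), (V * M) i k
      = (Q (k : ℕ)).eval (x i)
        + ∑ j ∈ Finset.range (k : ℕ), (Q j).eval (x i) * a j (k : ℕ) := by
    intro i k
    rw [Matrix.mul_apply]
    simp only [hV]
    exact genM (fun t => (Q t).eval (x i)) k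
  have hVN : ∀ (i k : Fin n), (V * N) i k
      = if (k : ℕ) = 0 then 0 else τ (k : ℕ) * (Q ((k : ℕ) - 1)).eval (x i) := by
    intro i k
    rw [Matrix.mul_apply]
    simp only [hV]
    exact genN (fun t => (Q t).eval (x i)) k
  -- the recurrence, rearranged
  have hQsum : ∀ k : ℕ, 1 ≤ k → k ≤ n - 1 →
      Q k + ∑ j ∈ Finset.range k, C (a j k) * Q j = C (τ k) * (X * Q (k - 1)) := by
    intro k h1 h2
    rw [hQrec k h1 h2]
    ring
  have hcoeffrec : ∀ (k : Fin n), 1 ≤ (k : ℕ) → ∀ l : ℕ,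
      (Q (k : ℕ)).coeff l + ∑ j ∈ Finset.range (k : ℕ), (Q j).coeff l * a j (k : ℕ)
        = τ (k : ℕ) * (if l = 0 then 0 else (Q ((k : ℕ) - 1)).coeff (l - 1)) := by
    intro k h1 l
    have h2 : (k : ℕ) ≤ n - 1 := by have := k.isLt; omega
    have h := congrArg (fun p => Polynomial.coeff p l) (hQsum (k : ℕ) h1 h2)
    simp only [Polynomial.coeff_add, Polynomial.finset_sum_coeff, Polynomial.coeff_C_mul] at h
    rw [Finset.sum_congr rfl (fun j _ => mul_comm ((Q j).coeff l) (a j (k : ℕ))), h]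
    cases l with
    | zero =>
      rw [if_pos rfl, Polynomial.mul_coeff_zero, Polynomial.coeff_X_zero, zero_mul, mul_zero]
    | succ m =>
      rw [if_neg (Nat.succ_ne_zero m), Polynomial.coeff_X_mul, Nat.add_sub_cancel]
  have hevalrec : ∀ (k : Fin n), 1 ≤ (k : ℕ) → ∀ z : ℂ,
      (Q (k : ℕ)).eval z + ∑ j ∈ Finset.range (k : ℕ), (Q j).eval z * a j (k : ℕ)
        = τ (k : ℕ) * (z * (Q ((k : ℕ) - 1)).eval z) := by
    intro k h1 z
    have h2 : (k : ℕ) ≤ n - 1 := by have := k.isLt; omega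
    have h := congrArg (fun p => Polynomial.eval z p) (hQsum (k : ℕ) h1 h2)
    simp only [Polynomial.eval_add, Polynomial.eval_finset_sum, Polynomial.eval_mul,
      Polynomial.eval_C, Polynomial.eval_X] at h
    rw [Finset.sum_congr rfl (fun j _ => mul_comm ((Q j).eval z) (a j (k : ℕ))), h]
  -- row 0 of SPQ versus M⁻¹
  have hJ0M : Jmat n 0 * SPQ * M = τ 0 • Jmat n 0 := by
    ext i k
    have lhs : (Jmat n 0 * SPQ * M) i k
        = (Q (k : ℕ)).coeff 0 + ∑ j ∈ Finset.range (k : ℕ), (Q j).coeff 0 * a j (k : ℕ) := by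
      rw [Matrix.mul_assoc, Jmat_mul_apply hn0]
      exact hSPQM _ _
    rw [lhs, Matrix.smul_apply]
    simp only [Jmat, Matrix.of_apply, smul_eq_mul]
    by_cases hk : (k : ℕ) = 0
    · rw [if_pos hk, mul_one, hk, Finset.sum_range_zero, add_zero, hQ0,
        Polynomial.coeff_C, if_pos rfl]
    · rw [if_neg hk, mul_zero]
      have h := hcoeffrec k (by omega) 0
      rw [if_pos rfl, mul_zero] at h
      exact h
  have hJ0 : Jmat n 0 * SPQ = τ 0 • (Jmat n 0 * M⁻¹) := by
    calc Jmat n 0 * SPQ = Jmat n 0 * SPQ * (M * M⁻¹) := by rw [hMM, Matrix.mul_one]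
      _ = Jmat n 0 * SPQ * M * M⁻¹ := by rw [Matrix.mul_assoc (Jmat n 0 * SPQ)]
      _ = (τ 0 • Jmat n 0) * M⁻¹ := by rw [hJ0M]
      _ = τ 0 • (Jmat n 0 * M⁻¹) := Matrix.smul_mul _ _ _
  -- shifting rows of SPQ with W
  have hJstep : ∀ m : ℕ, m + 1 < n → Jmat n m * SPQ * W = Jmat n (m + 1) * SPQ := by
    intro m hm1
    have hm : m < n := by omega
    have key : Jmat n (m + 1) * SPQ * M = Jmat n m * SPQ * N := by
      ext i k
      have lhs : (Jmat n (m + 1) * SPQ * M) i k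
          = (Q (k : ℕ)).coeff (m + 1)
            + ∑ j ∈ Finset.range (k : ℕ), (Q j).coeff (m + 1) * a j (k : ℕ) := by
        rw [Matrix.mul_assoc, Jmat_mul_apply hm1]
        exact hSPQM _ _
      have rhs : (Jmat n m * SPQ * N) i k
          = if (k : ℕ) = 0 then 0 else τ (k : ℕ) * (Q ((k : ℕ) - 1)).coeff m := by
        rw [Matrix.mul_assoc, Jmat_mul_apply hm]
        exact hSPQN _ _
      rw [lhs, rhs]
      by_cases hk : (k : ℕ) = 0
      · rw [if_pos hk, hk, Finset.sum_range_zero, add_zero, hQ0, Polynomial.coeff_C,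
          if_neg (Nat.succ_ne_zero m)]
      · rw [if_neg hk]
        have h := hcoeffrec k (by omega) (m + 1)
        rw [if_neg (Nat.succ_ne_zero m), Nat.add_sub_cancel] at h
        exact h
    calc Jmat n m * SPQ * W = Jmat n m * SPQ * N * M⁻¹ := by
          rw [hWdef, Matrix.mul_assoc (Jmat n m * SPQ)]
      _ = Jmat n (m + 1) * SPQ * M * M⁻¹ := by rw [key]
      _ = Jmat n (m + 1) * SPQ := by rw [Matrix.mul_assoc, hMM, Matrix.mul_one]
  -- displacement identity
  have hVW : V * W = Dm * V - Dm * (Jmat n 0 * SPQ) := by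
    have key : V * N = Dm * (V * M) - τ 0 • (Dm * Jmat n 0) := by
      ext i k
      rw [hVN, Matrix.sub_apply, Matrix.smul_apply, hDm, Matrix.diagonal_mul,
        Matrix.diagonal_mul, hVM]
      simp only [Jmat, Matrix.of_apply, smul_eq_mul]
      by_cases hk : (k : ℕ) = 0
      · rw [if_pos hk, if_pos hk, mul_one, hk, Finset.sum_range_zero, add_zero, hQ0,
          Polynomial.eval_C]
        ring
      · rw [if_neg hk, if_neg hk, mul_zero, mul_zero, sub_zero,
          hevalrec k (by omega) (x i)]
        rw [inv_mul_eq_div, eq_div_iff (hx i)]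
        ring
    have step1 : V * W = (Dm * (V * M) - τ 0 • (Dm * Jmat n 0)) * M⁻¹ := by
      rw [hWdef, ← Matrix.mul_assoc, key]
    rw [step1, Matrix.sub_mul, Matrix.smul_mul, Matrix.mul_assoc Dm (V * M) M⁻¹,
      Matrix.mul_assoc V M M⁻¹, hMM, Matrix.mul_one,
      Matrix.mul_assoc Dm (Jmat n 0) M⁻¹, hJ0, Matrix.mul_smul]
  -- powers
  have hVWk : ∀ k : ℕ, k < n →
      V * W ^ k = Dm ^ k * V - ∑ m ∈ Finset.range k, Dm ^ (k - m) * (Jmat n m * SPQ) := by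
    intro k
    induction k with
    | zero => intro _; simp
    | succ k ih =>
      intro hk1
      have hk : k < n := by omega
      have hsum : (∑ m ∈ Finset.range k, Dm ^ (k - m) * (Jmat n m * SPQ)) * W
          = ∑ m ∈ Finset.range k, Dm ^ (k - m) * (Jmat n (m + 1) * SPQ) := by
        rw [Finset.sum_mul]
        apply Finset.sum_congr rfl
        intro m hm
        rw [Finset.mem_range] at hm
        rw [Matrix.mul_assoc, hJstep m (by omega)]
      rw [pow_succ, ← Matrix.mul_assoc, ih hk, Matrix.sub_mul,
        Matrix.mul_assoc (Dm ^ k) V W, hVW, hsum,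
        Finset.sum_range_succ' (fun m => Dm ^ (k + 1 - m) * (Jmat n m * SPQ)) k,
        Matrix.mul_sub, ← Matrix.mul_assoc (Dm ^ k) Dm V,
        ← Matrix.mul_assoc (Dm ^ k) Dm (Jmat n 0 * SPQ), ← pow_succ]
      simp only [Nat.add_sub_add_right, Nat.sub_zero]
      abel
  -- the Horner functions
  have hF' : ∀ j : ℕ, j < n → ∀ y : ℂ,
      F j y = ∑ k ∈ Finset.range n, if j < k then d (k + 1) * y ^ (k - j) else 0 := by
    suffices H : ∀ t : ℕ, ∀ j : ℕ, j + t + 1 = n → ∀ y : ℂ,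
        F j y = ∑ k ∈ Finset.range n, if j < k then d (k + 1) * y ^ (k - j) else 0 by
      intro j hj y
      exact H (n - j - 1) j (by omega) y
    intro t
    induction t with
    | zero =>
      intro j hj y
      have h1 : F j y = 0 := by rw [show j = n - 1 by omega]; exact hFtop y
      rw [h1]
      symm
      apply Finset.sum_eq_zero
      intro k hk
      rw [Finset.mem_range] at hk
      rw [if_neg (by omega)]
    | succ t ih =>
      intro j hj y
      rw [hFrec j (by omega) y, ih (j + 1) (by omega) y]
      rw [Finset.sum_congr rfl (fun k _ => show
          (if j < k then d (k + 1) * y ^ (k - j) else 0)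
            = (if j + 1 = k then d (k + 1) * y ^ (k - j) else 0)
              + (if j + 1 < k then d (k + 1) * y ^ (k - j) else 0) from by
        by_cases h1 : j < k
        · by_cases h2 : j + 1 = k
          · rw [if_pos h1, if_pos h2, if_neg (by omega), add_zero]
          · rw [if_pos h1, if_neg h2, if_pos (by omega), zero_add]
        · rw [if_neg h1, if_neg (by omega), if_neg (by omega), add_zero])]
      rw [Finset.sum_add_distrib,
        Finset.sum_ite_eq (Finset.range n) (j + 1) (fun k => d (k + 1) * y ^ (k - j)),
        if_pos (Finset.mem_range.mpr (by omega)),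
        mul_add, Finset.mul_sum]
      rw [Finset.sum_congr rfl (fun k _ => show
          y * (if j + 1 < k then d (k + 1) * y ^ (k - (j + 1)) else 0)
            = (if j + 1 < k then d (k + 1) * y ^ (k - j) else 0) from by
        by_cases h : j + 1 < k
        · rw [if_pos h, if_pos h, show k - j = (k - (j + 1)) + 1 by omega, pow_succ]
          ring
        · rw [if_neg h, if_neg h, mul_zero])]
      rw [show j + 1 + 1 = j + 2 from rfl, show j + 1 - j = 1 by omega, pow_one]
      ring
  -- VF as a sum
  have hVFeq : VF = ∑ k ∈ Finset.range n,
      d (k + 1) • (∑ m ∈ Finset.range k, Dm ^ (k - m) * Jmat n m) := by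
    ext i j
    rw [hVF, hF' (j : ℕ) j.isLt ((x i)⁻¹)]
    simp only [Matrix.sum_apply, Matrix.smul_apply, smul_eq_mul]
    have inner : ∀ k m : ℕ, (Dm ^ (k - m) * Jmat n m) i j
        = if (j : ℕ) = m then ((x i)⁻¹) ^ (k - m) else 0 := by
      intro k m
      rw [hDm, Matrix.diagonal_pow, Matrix.diagonal_mul]
      simp only [Jmat, Matrix.of_apply, Pi.pow_apply, mul_ite, mul_one, mul_zero]
    simp only [inner, Finset.sum_ite_eq, Finset.mem_range]
    apply Finset.sum_congr rfl
    intro k _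
    by_cases h : (j : ℕ) < k
    · rw [if_pos h, if_pos h]
    · rw [if_neg h, if_neg h, mul_zero]
  -- final assembly
  have expand : V * (∑ k ∈ Finset.range n, d (k + 1) • W ^ k)
      = ∑ k ∈ Finset.range n, d (k + 1) • (V * W ^ k) := by
    rw [Matrix.mul_sum]
    exact Finset.sum_congr rfl fun k _ => Matrix.mul_smul V (d (k + 1)) (W ^ k)
  have step2 : (∑ k ∈ Finset.range n, d (k + 1) • (V * W ^ k))
      = ∑ k ∈ Finset.range n, d (k + 1) •
          (Dm ^ k * V - ∑ m ∈ Finset.range k, Dm ^ (k - m) * (Jmat n m * SPQ)) :=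
    Finset.sum_congr rfl fun k hk => by rw [hVWk k (Finset.mem_range.mp hk)]
  rw [expand, step2]
  rw [show (∑ k ∈ Finset.range n, d (k + 1) •
        (Dm ^ k * V - ∑ m ∈ Finset.range k, Dm ^ (k - m) * (Jmat n m * SPQ)))
      = (∑ k ∈ Finset.range n, d (k + 1) • (Dm ^ k * V))
        - ∑ k ∈ Finset.range n, d (k + 1) •
            ∑ m ∈ Finset.range k, Dm ^ (k - m) * (Jmat n m * SPQ) from by
    rw [← Finset.sum_sub_distrib]
    exact Finset.sum_congr rfl fun k _ => smul_sub _ _ _]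
  congr 1
  · rw [Finset.sum_mul]
    exact Finset.sum_congr rfl fun k _ => (Matrix.smul_mul (d (k + 1)) (Dm ^ k) V).symm
  · rw [hVFeq, Finset.sum_mul]
    apply Finset.sum_congr rfl
    intro k _
    rw [Matrix.smul_mul, Finset.sum_mul]
    exact congrArg (fun Y => d (k + 1) • Y)
      (Finset.sum_congr rfl fun m _ => (Matrix.mul_assoc _ _ _).symm)
end
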